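/- For every nonnegative integer n, p_{2n,μ}(1,-1) = (μ/(n+μ))·p_{2n,μ}(1,1), where for n = 0 and μ = 0 the quotient μ/(n+μ) is interpreted as 1. Equivalently, for n ≥ 1: Σ_{k=0}^{2n}(-1)^k C_μ(2n,k) = (μ/(n+μ))·Σ_{k=0}^{2n} C_μ(2n,k). -/

import Mathlib

open Finset

/-- The μ-deformed factorial function γ_μ. -/
noncomputable def gammaMu (μ : ℝ) : ℕ → ℝ
  | 0 => 1
  | n + 1 => ((n + 1 : ℝ) + 2 * μ * (if Odd (n + 1) then 1 else 0)) * gammaMu μ n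

/-- The μ-deformed binomial coefficient C_μ(n,k), zero outside 0 ≤ k ≤ n. -/
noncomputable def binomMu (μ : ℝ) (n : ℕ) (k : ℤ) : ℝ :=
  if 0 ≤ k ∧ k ≤ (n : ℤ) then gammaMu μ n / (gammaMu μ (n - k.toNat) * gammaMu μ k.toNat) else 0

/-- The n-th μ-deformed binomial polynomial p_{n,μ}(x,y). -/
noncomputable def pMu (μ : ℝ) (n : ℕ) (x y : ℂ) : ℂ :=
  ∑ k ∈ Finset.range (n + 1), (binomMu μ n k : ℂ) * x ^ k * y ^ (n - k)

/-- The μ-deformed exponential function. -/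
noncomputable def expMu (μ : ℝ) (z : ℂ) : ℂ :=
  ∑' n : ℕ, z ^ n / (gammaMu μ n : ℂ)

/-- The Bessel function of the first kind of order ν, for positive real argument. -/
noncomputable def besselJ (ν x : ℝ) : ℝ :=
  ∑' m : ℕ, ((-1) ^ m / (Nat.factorial m * Real.Gamma (ν + m + 1))) * (x / 2) ^ ((2 * m : ℝ) + ν)

lemma gammaMu_pos (μ : ℝ) (hμ : -(1/2 : ℝ) < μ) : ∀ n, 0 < gammaMu μ n := by
  intro n
  induction n with
  | zero => norm_num [gammaMu]
  | succ n ih =>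
    rw [gammaMu]
    apply mul_pos _ ih
    by_cases h : Odd (n+1)
    · simp only [h, if_pos]
      have : (0:ℝ) ≤ (n:ℝ) := Nat.cast_nonneg n
      linarith
    · simp only [h, if_neg, not_false_iff]
      linarith [Nat.cast_nonneg (α := ℝ) n]

lemma binomMu_nat (μ : ℝ) (n k : ℕ) (h : k ≤ n) :
    binomMu μ n (k : ℤ) = gammaMu μ n / (gammaMu μ (n - k) * gammaMu μ k) := by
  rw [binomMu, if_pos ⟨Int.natCast_nonneg k, by exact_mod_cast h⟩, Int.toNat_natCast]

lemma binomMu_zero_of_gt (μ : ℝ) (n : ℕ) (k : ℤ) (h : (n : ℤ) < k) : binomMu μ n k = 0 := by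
  rw [binomMu, if_neg]; rintro ⟨_, h2⟩; omega

lemma binomMu_neg (μ : ℝ) (n : ℕ) (k : ℤ) (h : k < 0) : binomMu μ n k = 0 := by
  rw [binomMu, if_neg]; rintro ⟨h1, _⟩; omega

lemma binomMu_self (μ : ℝ) (hμ : -(1/2:ℝ) < μ) (n : ℕ) : binomMu μ n (n : ℤ) = 1 := by
  rw [binomMu_nat μ n n le_rfl]
  simp [Nat.sub_self, gammaMu]
  exact ne_of_gt (gammaMu_pos μ hμ n)

lemma binomMu_zero (μ : ℝ) (hμ : -(1/2:ℝ) < μ) (n : ℕ) : binomMu μ n (0 : ℤ) = 1 := by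
  rw [show (0:ℤ) = ((0:ℕ):ℤ) by norm_num, binomMu_nat μ n 0 (Nat.zero_le n)]
  simp [gammaMu]
  exact ne_of_gt (gammaMu_pos μ hμ n)

lemma gammaMu_even_succ (μ : ℝ) (m : ℕ) :
    gammaMu μ (2*m+2) = ((2*m:ℝ)+2) * gammaMu μ (2*m+1) := by
  rw [show 2*m+2 = (2*m+1)+1 by ring, gammaMu]
  have : ¬ Odd (2*m+1+1) := by simp [Nat.odd_iff]; omega
  rw [if_neg this]; push_cast; ring

lemma key (μ : ℝ) (hμ : -(1/2:ℝ) < μ) (m k : ℕ) :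
    (((m:ℝ)+1+μ) - μ*(-1)^k) * binomMu μ (2*m+2) (k : ℤ) =
    ((m:ℝ)+1) * (binomMu μ (2*m+1) (k : ℤ) + binomMu μ (2*m+1) ((k:ℤ)-1)) := by
  rcases Nat.eq_zero_or_pos k with rfl | hk1
  · push_cast
    rw [binomMu_zero μ hμ, binomMu_zero μ hμ, binomMu_neg μ (2*m+1) (-1) (by norm_num)]
    norm_num
  rcases lt_or_ge (2*m+2) k with hk2 | hk2
  · rw [binomMu_zero_of_gt μ (2*m+2) k (by exact_mod_cast hk2),
        binomMu_zero_of_gt μ (2*m+1) k (by exact_mod_cast (by omega : 2*m+1 < k)),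
        binomMu_zero_of_gt μ (2*m+1) ((k:ℤ)-1) (by push_cast; omega)]
    ring
  rcases eq_or_lt_of_le hk2 with rfl | hk3
  · -- k = 2m+2
    rw [binomMu_self μ hμ, binomMu_zero_of_gt μ (2*m+1) ((2*m+2 : ℕ):ℤ) (by push_cast; omega),
        show ((2*m+2:ℕ):ℤ) - 1 = ((2*m+1:ℕ):ℤ) by push_cast; ring, binomMu_self μ hμ]
    have : ((-1:ℝ))^(2*m+2) = 1 := by
      rw [pow_succ, pow_succ, pow_mul]; norm_num
    rw [this]; ring
  -- 1 ≤ k ≤ 2m+1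
  obtain ⟨j, rfl⟩ : ∃ j, k = j + 1 := ⟨k-1, by omega⟩
  obtain ⟨r, hr⟩ : ∃ r, 2*m+1 = (j+1) + r := ⟨2*m-j, by omega⟩
  set t : ℝ := if Odd (j+1) then 1 else 0 with ht
  have hparity : (if Odd (r+1) then (1:ℝ) else 0) = t := by
    rw [ht]
    have : Odd (r+1) ↔ Odd (j+1) := by rw [Nat.odd_iff, Nat.odd_iff]; omega
    simp [this]
  have hγk : gammaMu μ (j+1) = ((j:ℝ)+1+2*μ*t) * gammaMu μ j := by
    rw [gammaMu, ht]
  have hγr : gammaMu μ (r+1) = ((r:ℝ)+1+2*μ*t) * gammaMu μ r := by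
    rw [gammaMu, hparity]
  have hneg : ((-1:ℝ))^(j+1) = 1 - 2*t := by
    rw [ht]
    rcases Nat.even_or_odd (j+1) with h | h
    · simp [h.neg_one_pow, Nat.not_odd_iff_even.mpr h]
    · simp [h.neg_one_pow, h]; norm_num
  rw [binomMu_nat μ (2*m+2) (j+1) (by omega), binomMu_nat μ (2*m+1) (j+1) (by omega),
      show ((j+1:ℕ):ℤ) - 1 = ((j:ℕ):ℤ) by push_cast; ring,
      binomMu_nat μ (2*m+1) j (by omega)]
  rw [show 2*m+2 - (j+1) = r+1 by omega, show 2*m+1 - (j+1) = r by omega,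
      show 2*m+1 - j = r+1 by omega]
  rw [gammaMu_even_succ, hγk, hγr, hneg]
  have hγj := gammaMu_pos μ hμ j
  have hγrr := gammaMu_pos μ hμ r
  have hγa := gammaMu_pos μ hμ (2*m+1)
  have ht01 : t = 0 ∨ t = 1 := by rw [ht]; split <;> simp
  have hjt : (0:ℝ) < (j:ℝ)+1+2*μ*t := by
    rcases ht01 with h | h <;> rw [h] <;> [skip; skip] <;> nlinarith [Nat.cast_nonneg (α := ℝ) j]
  have hrt : (0:ℝ) < (r:ℝ)+1+2*μ*t := by
    rcases ht01 with h | h <;> rw [h] <;> nlinarith [Nat.cast_nonneg (α := ℝ) r]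
  have hrj : (r:ℝ) + 1 + ((j:ℝ)+1) = 2*m+2 := by
    have : r + 1 + (j+1) = 2*m+2 := by omega
    exact_mod_cast congrArg (Nat.cast : ℕ → ℝ) this
  field_simp
  have hj' : (j:ℝ)+1+μ*2*t ≠ 0 := ne_of_gt (by linarith [hjt, show μ*2*t = 2*μ*t by ring])
  have hr' : (r:ℝ)+1+μ*2*t ≠ 0 := ne_of_gt (by linarith [hrt, show μ*2*t = 2*μ*t by ring])
  rw [div_add_div _ _ hj' hr', div_eq_div_iff (mul_ne_zero hr' hj') (mul_ne_zero hj' hr')]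
  linear_combination (-(((r:ℝ)+1+μ*2*t) * ((j:ℝ)+1+μ*2*t))) * hrj

lemma telescope (μ : ℝ) (hμ : -(1/2:ℝ) < μ) (m : ℕ) :
    ∑ k ∈ Finset.range (2*m+3),
      ((((m:ℝ)+1+μ)*(-1)^k - μ) * binomMu μ (2*m+2) (k : ℤ)) = 0 := by
  have hterm : ∀ k ∈ Finset.range (2*m+3),
      (((m:ℝ)+1+μ)*(-1)^k - μ) * binomMu μ (2*m+2) (k : ℤ) =
      ((fun i : ℕ => ((m:ℝ)+1) * ((-1:ℝ)^i * binomMu μ (2*m+1) ((i:ℤ)-1))) k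
        - (fun i : ℕ => ((m:ℝ)+1) * ((-1:ℝ)^i * binomMu μ (2*m+1) ((i:ℤ)-1))) (k+1)) := by
    intro k _
    simp only
    have hsq : ((-1:ℝ))^k * ((-1:ℝ))^k = 1 := by rw [← mul_pow]; norm_num
    have hc : ((k+1:ℕ):ℤ) - 1 = (k:ℤ) := by push_cast; ring
    have hk := key μ hμ m k
    rw [hc, pow_succ]
    linear_combination ((-1:ℝ)^k) * hk + μ * binomMu μ (2*m+2) (k:ℤ) * hsq
  rw [Finset.sum_congr rfl hterm, Finset.sum_range_sub']
  rw [show ((0:ℕ):ℤ) - 1 = -1 by norm_num, binomMu_neg μ (2*m+1) (-1) (by norm_num),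
      binomMu_zero_of_gt μ (2*m+1) (((2*m+3:ℕ):ℤ)-1) (by push_cast; omega)]
  ring

theorem pMu_alt_sum_ratio (μ : ℝ) (hμ : -(1/2 : ℝ) < μ) (n : ℕ) :
    pMu μ (2 * n) 1 (-1) =
      ((if n = 0 ∧ μ = 0 then 1 else μ / (n + μ) : ℝ) : ℂ) * pMu μ (2 * n) 1 1 := by
  rcases n with _ | m
  · have hp1 : pMu μ (2 * 0) 1 (-1) = 1 := by
      simp [pMu, binomMu, gammaMu]
    have hp2 : pMu μ (2 * 0) 1 1 = 1 := by
      simp [pMu, binomMu, gammaMu]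
    rw [hp1, hp2, mul_one]
    by_cases h : μ = 0
    · simp [h]
    · norm_num [h, div_self]
  · have hm0 : (0:ℝ) ≤ (m:ℝ) := Nat.cast_nonneg m
    have hne : ((m:ℝ)+1+μ) ≠ 0 := by nlinarith
    have key0 : (((m:ℝ)+1+μ : ℝ) : ℂ) * pMu μ (2 * (m+1)) 1 (-1) =
        ((μ : ℝ) : ℂ) * pMu μ (2 * (m+1)) 1 1 := by
      rw [pMu, pMu, Finset.mul_sum, Finset.mul_sum, ← sub_eq_zero, ← Finset.sum_sub_distrib]
      have hN : 2 * (m+1) + 1 = 2*m+3 := by ring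
      have hterm : ∀ k ∈ Finset.range (2 * (m+1) + 1),
          (((m:ℝ)+1+μ : ℝ) : ℂ) * ((binomMu μ (2*(m+1)) k : ℝ) * (1:ℂ) ^ k * (-1) ^ (2*(m+1) - k))
          - ((μ : ℝ) : ℂ) * ((binomMu μ (2*(m+1)) k : ℝ) * (1:ℂ) ^ k * (1:ℂ) ^ (2*(m+1) - k))
          = (((((m:ℝ)+1+μ)*(-1)^k - μ) * binomMu μ (2*m+2) (k : ℤ) : ℝ) : ℂ) := by
        intro k hk
        have hkle : k ≤ 2*(m+1) := by
          have := Finset.mem_range.mp hk; omega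
        have hpow : ((-1:ℂ))^(2*(m+1)-k) = (-1)^k := by
          have hiff : Odd (2*(m+1)-k) ↔ Odd k := by
            rw [Nat.odd_iff, Nat.odd_iff]; omega
          rcases Nat.even_or_odd k with h | h
          · have h2 : Even (2*(m+1)-k) := by
              rw [← Nat.not_odd_iff_even] at h ⊢
              exact fun ho => h (hiff.mp ho)
            rw [h.neg_one_pow, h2.neg_one_pow]
          · rw [h.neg_one_pow, (hiff.mpr h).neg_one_pow]
        rw [hpow, show 2*(m+1) = 2*m+2 by ring]
        push_cast
        ring
      rw [Finset.sum_congr rfl hterm]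
      rw [show (0:ℂ) = ((0:ℝ):ℂ) by norm_num, ← telescope μ hμ m, hN, Complex.ofReal_sum]
    have hcond : ¬(m + 1 = 0 ∧ μ = 0) := by simp
    rw [if_neg hcond]
    have hne' : (((m:ℝ)+1+μ : ℝ) : ℂ) ≠ 0 := Complex.ofReal_ne_zero.mpr hne
    rw [show ((μ / (↑(m+1) + μ) : ℝ) : ℂ) = ((μ:ℝ):ℂ) / (((m:ℝ)+1+μ : ℝ) : ℂ) by push_cast; ring_nf]
    rw [div_mul_eq_mul_div, eq_div_iff hne']
    linear_combination key0
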